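/- Let N ≥ 1, let x_1, …, x_N ∈ ℝ, and let ν_0 > 0, s_0² > 0, κ_0 > 0, m_0 ∈ ℝ. Define ν' = ν_0 + N, κ' = κ_0 + N, m' = (κ_0 m_0 + ∑_n x_n)/κ', and s'² = (ν_0 s_0² + κ_0 m_0² + ∑_n x_n² − κ' m'²)/ν', and assume s'² > 0. Then ∫_0^∞ ∫_ℝ ∏_{n=1}^N N(x_n ∣ μ, σ²) · NIX(μ, σ² ∣ ν_0, s_0², κ_0, m_0) dμ d(σ²) = (2π)^{−N/2} · Z(ν', s'², κ', m') / Z(ν_0, s_0², κ_0, m_0), where N(x ∣ μ, σ²) = (2πσ²)^{−1/2} exp(−(x−μ)²/(2σ²)), NIX(μ, σ² ∣ ν, s², κ, m) = N(μ ∣ m, σ²/κ) · χ⁻²(σ² ∣ ν, s²) with χ⁻²(v ∣ ν, τ) = ((ντ/2)^{ν/2}/Γ(ν/2)) v^{−(ν/2+1)} e^{−ντ/(2v)}, and Z(ν, s², κ, m) = κ^{−1/2} Γ(ν/2) (ν s²/2)^{−ν/2}. -/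

import Mathlib

open Real Finset MeasureTheory

/-- Scalar Gaussian density `N(x ∣ μ, σ²)`. -/
noncomputable def gauss1 (x μ σ2 : ℝ) : ℝ :=
  (2 * Real.pi * σ2) ^ (-(1 : ℝ) / 2) * Real.exp (-(x - μ) ^ 2 / (2 * σ2))

/-- Scaled inverse chi-squared density `χ⁻²(v ∣ ν, τ)`. -/
noncomputable def scaledInvChiSq (v ν τ : ℝ) : ℝ :=
  ((ν * τ / 2) ^ (ν / 2) / Real.Gamma (ν / 2)) * v ^ (-(ν / 2 + 1)) *
    Real.exp (-(ν * τ) / (2 * v))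

/-- Normal-inverse-chi-squared density `NIX(μ, σ² ∣ ν, s², κ, m)`. -/
noncomputable def nix (μ σ2 ν s2 κ m : ℝ) : ℝ :=
  gauss1 μ m (σ2 / κ) * scaledInvChiSq σ2 ν s2

/-- Normalizer `Z(ν, s², κ, m)` of the normal-inverse-chi-squared family. -/
noncomputable def nixZ (ν s2 κ _m : ℝ) : ℝ :=
  κ ^ (-(1 : ℝ) / 2) * Real.Gamma (ν / 2) * (ν * s2 / 2) ^ (-(ν / 2))

lemma invGamma_integral {a b : ℝ} (ha : 0 < a) (hb : 0 < b) :
    ∫ v in Set.Ioi (0:ℝ), v ^ (-(a+1)) * Real.exp (-(b/v)) = Real.Gamma a * b ^ (-a) := by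
  have h := MeasureTheory.integral_comp_rpow_Ioi
    (fun y : ℝ => y ^ (-(a+1)) * Real.exp (-(b/y))) (p := -1) (by norm_num)
  rw [← h]
  rw [setIntegral_congr_fun measurableSet_Ioi (g := fun t : ℝ => t ^ (a-1) * Real.exp (-(b*t)))
    (by
      intro t ht
      have ht' : (0:ℝ) < t := ht
      simp only [smul_eq_mul]
      rw [abs_neg, abs_one, one_mul, ← Real.rpow_mul ht'.le]
      rw [show b / t ^ (-1 : ℝ) = b * t by rw [Real.rpow_neg_one]; field_simp]
      rw [← mul_assoc, ← Real.rpow_add ht']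
      norm_num
      rw [show (-2 : ℝ) + (a + 1) = a - 1 by ring])]
  rw [Real.integral_rpow_mul_exp_neg_mul_Ioi ha hb, one_div, Real.inv_rpow hb.le,
    ← Real.rpow_neg hb.le, mul_comm]

lemma gauss_shift {b : ℝ} (hb : 0 < b) (c : ℝ) :
    ∫ μ : ℝ, Real.exp (-b * (μ - c)^2) = Real.sqrt (π / b) := by
  rw [← integral_gaussian b]
  exact integral_sub_right_eq_self (fun μ => Real.exp (-b*μ^2)) c

/-- Marginal likelihood under the normal-inverse-chi-squared prior (Appendix D): it
equals `(2π)^{−N/2}` times the ratio of the posterior to the prior normalizer. -/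
theorem nix_marginal_likelihood
    (N : ℕ) (hN : 1 ≤ N) (x : Fin N → ℝ)
    (ν0 s02 κ0 m0 : ℝ) (hν0 : 0 < ν0) (hs02 : 0 < s02) (hκ0 : 0 < κ0)
    (ν' κ' m' s'2 : ℝ)
    (hν' : ν' = ν0 + N) (hκ' : κ' = κ0 + N)
    (hm' : m' = (κ0 * m0 + ∑ n, x n) / κ')
    (hs'2 : s'2 = (ν0 * s02 + κ0 * m0 ^ 2 + (∑ n, (x n) ^ 2) - κ' * m' ^ 2) / ν')
    (hs'2pos : 0 < s'2) :
    ∫ σ2 in Set.Ioi (0 : ℝ), ∫ μ : ℝ,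
        (∏ n, gauss1 (x n) μ σ2) * nix μ σ2 ν0 s02 κ0 m0 =
      (2 * Real.pi) ^ (-(N : ℝ) / 2) * nixZ ν' s'2 κ' m' / nixZ ν0 s02 κ0 m0 := by
  have hκ'pos : 0 < κ' := by rw [hκ']; positivity
  have hν'pos : 0 < ν' := by rw [hν']; positivity
  have hκm : κ' * m' = κ0 * m0 + ∑ n, x n := by
    rw [hm']; field_simp
  have hνs : ν' * s'2 = ν0 * s02 + κ0 * m0 ^ 2 + (∑ n, (x n) ^ 2) - κ' * m' ^ 2 := by
    rw [hs'2]; field_simp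
  -- the key inner computation
  have key : Set.EqOn
      (fun σ2 => ∫ μ : ℝ, (∏ n, gauss1 (x n) μ σ2) * nix μ σ2 ν0 s02 κ0 m0)
      (fun σ2 => ((2*Real.pi)^(-(N:ℝ)/2) * κ0^((1:ℝ)/2) * κ'^(-(1:ℝ)/2) *
          ((ν0*s02/2)^(ν0/2)/Real.Gamma (ν0/2))) *
        (σ2 ^ (-(ν'/2+1)) * Real.exp (-((ν'*s'2/2)/σ2)))) (Set.Ioi 0) := by
    intro σ2 hσ2
    have hσ2' : (0:ℝ) < σ2 := hσ2
    have hprod : ∀ μ : ℝ, ∏ n, gauss1 (x n) μ σ2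
        = (2 * Real.pi * σ2) ^ (-(N : ℝ)/2) * Real.exp (-(∑ n, (x n - μ)^2)/(2*σ2)) := by
      intro μ
      simp only [gauss1, Finset.prod_mul_distrib, Finset.prod_const, ← Real.exp_sum,
        Finset.card_univ, Fintype.card_fin]
      congr 1
      · rw [← Real.rpow_natCast ((2*Real.pi*σ2) ^ (-(1:ℝ)/2)) N,
          ← Real.rpow_mul (by positivity)]
        congr 1
        ring
      · congr 1
        rw [← Finset.sum_div]
        congr 1
        simp
    have point : ∀ μ : ℝ, (∏ n, gauss1 (x n) μ σ2) * nix μ σ2 ν0 s02 κ0 m0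
        = ((2*Real.pi*σ2)^(-(N:ℝ)/2) * (2*Real.pi*(σ2/κ0))^(-(1:ℝ)/2) *
            scaledInvChiSq σ2 ν0 s02 * Real.exp (-(ν'*s'2 - ν0*s02)/(2*σ2))) *
          Real.exp (-(κ'/(2*σ2)) * (μ - m')^2) := by
      intro μ
      rw [hprod μ]
      simp only [nix, gauss1]
      have hsum : ∑ n, (x n - μ)^2 = (∑ n, (x n)^2) - 2*μ*(∑ n, x n) + N*μ^2 := by
        have h1 : ∀ n : Fin N, (x n - μ)^2 = (x n)^2 - 2*μ*(x n) + μ^2 := fun n => by ring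
        rw [Finset.sum_congr rfl (fun n _ => h1 n), Finset.sum_add_distrib,
          Finset.sum_sub_distrib, ← Finset.mul_sum, Finset.sum_const, Finset.card_univ,
          Fintype.card_fin, nsmul_eq_mul]
      have hnum : -((∑ n, (x n)^2) - 2*μ*(∑ n, x n) + N*μ^2) - κ0*(μ - m0)^2
          = -κ'*(μ-m')^2 - (ν'*s'2 - ν0*s02) := by
        linear_combination hνs - 2*μ*hκm + μ^2*hκ'
      have hexp : Real.exp (-(∑ n, (x n - μ)^2)/(2*σ2))
            * Real.exp (-(μ - m0)^2 / (2*(σ2/κ0)))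
          = Real.exp (-(κ'/(2*σ2)) * (μ - m')^2)
            * Real.exp (-(ν'*s'2 - ν0*s02)/(2*σ2)) := by
        rw [← Real.exp_add, ← Real.exp_add]
        congr 1
        rw [hsum]
        calc -((∑ n, (x n)^2) - 2*μ*(∑ n, x n) + N*μ^2)/(2*σ2)
              + (-(μ - m0)^2 / (2*(σ2/κ0)))
            = (-((∑ n, (x n)^2) - 2*μ*(∑ n, x n) + N*μ^2) - κ0*(μ - m0)^2)/(2*σ2) := by
              field_simp
              ring
          _ = (-κ'*(μ-m')^2 - (ν'*s'2 - ν0*s02))/(2*σ2) := by rw [hnum]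
          _ = -(κ'/(2*σ2)) * (μ - m')^2 + (-(ν'*s'2 - ν0*s02)/(2*σ2)) := by ring
      linear_combination ((2*Real.pi*σ2)^(-(N:ℝ)/2) * (2*Real.pi*(σ2/κ0))^(-(1:ℝ)/2) *
        scaledInvChiSq σ2 ν0 s02) * hexp
    show (∫ μ : ℝ, (∏ n, gauss1 (x n) μ σ2) * nix μ σ2 ν0 s02 κ0 m0) = _
    simp only [point]
    rw [MeasureTheory.integral_const_mul, gauss_shift (by positivity) m']
    -- now pure algebra with rpow
    rw [show π / (κ'/(2*σ2)) = (2*Real.pi*σ2)/κ' by field_simp, Real.sqrt_eq_rpow]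
    have e1 : (2*Real.pi*(σ2/κ0))^(-(1:ℝ)/2)
        = (2*Real.pi*σ2)^(-(1:ℝ)/2) * κ0^((1:ℝ)/2) := by
      rw [show 2*Real.pi*(σ2/κ0) = (2*Real.pi*σ2)/κ0 by ring,
        Real.div_rpow (by positivity) hκ0.le, div_eq_mul_inv, ← Real.rpow_neg hκ0.le]
      norm_num
    have e2 : ((2*Real.pi*σ2)/κ')^((1:ℝ)/2)
        = (2*Real.pi*σ2)^((1:ℝ)/2) * κ'^(-(1:ℝ)/2) := by
      rw [Real.div_rpow (by positivity) hκ'pos.le, div_eq_mul_inv, ← Real.rpow_neg hκ'pos.le]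
      norm_num
    have e3 : (2*Real.pi*σ2)^(-(1:ℝ)/2) * (2*Real.pi*σ2)^((1:ℝ)/2) = 1 := by
      rw [← Real.rpow_add (by positivity)]
      norm_num
    have e4 : (2*Real.pi*σ2)^(-(N:ℝ)/2) = (2*Real.pi)^(-(N:ℝ)/2) * σ2^(-(N:ℝ)/2) :=
      Real.mul_rpow (by positivity) hσ2'.le
    have e5 : σ2^(-(N:ℝ)/2) * σ2^(-(ν0/2+1)) = σ2^(-(ν'/2+1)) := by
      rw [← Real.rpow_add hσ2']
      congr 1
      rw [hν']
      ring
    have e6 : Real.exp (-(ν0*s02)/(2*σ2)) * Real.exp (-(ν'*s'2 - ν0*s02)/(2*σ2))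
        = Real.exp (-((ν'*s'2/2)/σ2)) := by
      rw [← Real.exp_add]
      congr 1
      field_simp
      ring
    simp only [scaledInvChiSq]
    rw [e1, e2]
    linear_combination
      ((2*Real.pi*σ2)^(-(1:ℝ)/2) * (2*Real.pi*σ2)^((1:ℝ)/2) * κ0^((1:ℝ)/2) *
        ((ν0*s02/2)^(ν0/2)/Real.Gamma (ν0/2)) * σ2^(-(ν0/2+1)) *
        Real.exp (-(ν0*s02)/(2*σ2)) * Real.exp (-(ν'*s'2 - ν0*s02)/(2*σ2)) * κ'^(-(1:ℝ)/2)) * e4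
      + ((2*Real.pi)^(-(N:ℝ)/2) * σ2^(-(N:ℝ)/2) * κ0^((1:ℝ)/2) *
        ((ν0*s02/2)^(ν0/2)/Real.Gamma (ν0/2)) * σ2^(-(ν0/2+1)) *
        Real.exp (-(ν0*s02)/(2*σ2)) * Real.exp (-(ν'*s'2 - ν0*s02)/(2*σ2)) * κ'^(-(1:ℝ)/2)) * e3
      + ((2*Real.pi)^(-(N:ℝ)/2) * κ0^((1:ℝ)/2) *
        ((ν0*s02/2)^(ν0/2)/Real.Gamma (ν0/2)) *
        Real.exp (-(ν0*s02)/(2*σ2)) * Real.exp (-(ν'*s'2 - ν0*s02)/(2*σ2)) * κ'^(-(1:ℝ)/2)) * e5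
      + ((2*Real.pi)^(-(N:ℝ)/2) * σ2^(-(ν'/2+1)) * κ0^((1:ℝ)/2) *
        ((ν0*s02/2)^(ν0/2)/Real.Gamma (ν0/2)) * κ'^(-(1:ℝ)/2)) * e6
  rw [setIntegral_congr_fun measurableSet_Ioi key, MeasureTheory.integral_const_mul,
    invGamma_integral (by positivity) (by positivity)]
  -- final algebra
  simp only [nixZ]
  have g1 : κ0 ^ (-(1:ℝ)/2) = (κ0 ^ ((1:ℝ)/2))⁻¹ := by
    rw [neg_div, Real.rpow_neg hκ0.le]
  have g2 : (ν0*s02/2) ^ (-(ν0/2)) = ((ν0*s02/2) ^ (ν0/2))⁻¹ :=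
    Real.rpow_neg (by positivity) _
  rw [g1, g2]
  have h1 : Real.Gamma (ν0/2) ≠ 0 := (Real.Gamma_pos_of_pos (by positivity)).ne'
  have h2 : (κ0 ^ ((1:ℝ)/2)) ≠ 0 := (Real.rpow_pos_of_pos hκ0 _).ne'
  have h3 : ((ν0*s02/2) ^ (ν0/2)) ≠ 0 := (Real.rpow_pos_of_pos (by positivity) _).ne'
  field_simp
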